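/- Let ν be a probability measure with finite support on a measurable space in which singletons are measurable, and let ε > 0. Then there exist m ∈ ℕ and points z_1,…,z_m, each belonging to the support of ν, such that the measure μ := (1/m)∑_{i=1}^m δ_{z_i} has the same support as ν and satisfies (1−ε)ν ≤ μ ≤ (1+ε)ν, i.e., (1−ε)ν(A) ≤ μ(A) ≤ (1+ε)ν(A) for every measurable set A. -/

import Mathlib

open MeasureTheory ENNReal
open scoped BigOperators

namespace Rendezvous

variable {X : Type*}

/-- The `n`-th Chebyshev constant `Mₙ(H,L)` of `L` with respect to `H` for the kernel `k`. -/
noncomputable def chebMn (k : X → X → ℝ≥0∞) (n : ℕ) (H L : Set X) : ℝ≥0∞ :=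
  ⨆ w : Fin n → H, ⨅ x : L, (∑ j, k (x : X) ((w j : X))) / (n : ℝ≥0∞)

/-- The `n`-th dual Chebyshev constant `M̄ₙ(H,L)`. -/
noncomputable def chebMnDual (k : X → X → ℝ≥0∞) (n : ℕ) (H L : Set X) : ℝ≥0∞ :=
  ⨅ w : Fin n → H, ⨆ x : L, (∑ j, k (x : X) ((w j : X))) / (n : ℝ≥0∞)

/-- The Chebyshev constant `M(H,L) = sup_{n ≥ 1} Mₙ(H,L)`. -/
noncomputable def chebM (k : X → X → ℝ≥0∞) (H L : Set X) : ℝ≥0∞ :=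
  ⨆ n : ℕ, ⨆ (_ : 1 ≤ n), chebMn k n H L

/-- The dual Chebyshev constant `M̄(H,L) = inf_{n ≥ 1} M̄ₙ(H,L)`. -/
noncomputable def chebMDual (k : X → X → ℝ≥0∞) (H L : Set X) : ℝ≥0∞ :=
  ⨅ n : ℕ, ⨅ (_ : 1 ≤ n), chebMnDual k n H L

/-- The potential `U^μ(x) = ∫ k(x,y) dμ(y)` of a measure. -/
noncomputable def pot [MeasurableSpace X] (k : X → X → ℝ≥0∞) (μ : Measure X) (x : X) : ℝ≥0∞ :=
  ∫⁻ y, k x y ∂μ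

/-- `μ` is a tight (inner regular w.r.t. compact sets) Borel probability measure
concentrated on `H`. -/
def TightProbOn [TopologicalSpace X] [MeasurableSpace X] (μ : Measure X) (H : Set X) : Prop :=
  IsProbabilityMeasure μ ∧ μ.InnerRegular ∧ μ Hᶜ = 0

/-- The quasi-uniform energy `q(H,L) = inf_{μ ∈ M₁(H)} sup_{x ∈ L} U^μ(x)`. -/
noncomputable def qUp [TopologicalSpace X] [MeasurableSpace X] (k : X → X → ℝ≥0∞)
    (H L : Set X) : ℝ≥0∞ :=
  ⨅ (μ : Measure X) (_ : TightProbOn μ H), ⨆ x : L, pot k μ (x : X)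

/-- The dual quasi-uniform energy `q̲(H,L) = sup_{μ ∈ M₁(H)} inf_{x ∈ L} U^μ(x)`. -/
noncomputable def qLow [TopologicalSpace X] [MeasurableSpace X] (k : X → X → ℝ≥0∞)
    (H L : Set X) : ℝ≥0∞ :=
  ⨆ (μ : Measure X) (_ : TightProbOn μ H), ⨅ x : L, pot k μ (x : X)

end Rendezvous

open Rendezvous

/-- For any `ε > 0` and any finitely supported probability measure `ν`
(on a measurable space with measurable singletons) there is a measure of the form
`μ = (1/m) ∑_{i=1}^m δ_{z_i}` having the same support as `ν` and satisfying
`(1-ε)ν ≤ μ ≤ (1+ε)ν`. -/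
theorem finitelySupported_uniform_approx {α : Type*} [MeasurableSpace α]
    [MeasurableSingletonClass α]
    (ν : Measure α) (hν : IsProbabilityMeasure ν)
    (F : Finset α) (hF : ν (F : Set α) = 1) (hFpos : ∀ z ∈ F, 0 < ν {z})
    (ε : ℝ) (hε : 0 < ε) :
    ∃ (m : ℕ) (_ : 0 < m) (z : Fin m → α),
      (∀ i, z i ∈ F) ∧ (∀ w ∈ F, ∃ i, z i = w) ∧
      ∀ A : Set α, MeasurableSet A →
        ENNReal.ofReal (1 - ε) * ν A
            ≤ ((m : ℝ≥0∞)⁻¹ • ∑ i : Fin m, MeasureTheory.Measure.dirac (z i)) A ∧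
        ((m : ℝ≥0∞)⁻¹ • ∑ i : Fin m, MeasureTheory.Measure.dirac (z i)) A
            ≤ ENNReal.ofReal (1 + ε) * ν A := by
  classical
  have hFne : F.Nonempty := by
    rcases F.eq_empty_or_nonempty with h | h
    · exfalso; rw [h] at hF; simp at hF
    · exact h
  set q : α → ℝ := fun a => (ν {a}).toReal with hq
  have hνfin : ∀ a : α, ν {a} ≠ ⊤ := fun a => measure_ne_top ν _
  have hqof : ∀ a : α, ν {a} = ENNReal.ofReal (q a) := fun a =>
    (ENNReal.ofReal_toReal (hνfin a)).symm
  have hqpos : ∀ a ∈ F, 0 < q a := fun a ha =>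
    ENNReal.toReal_pos (hFpos a ha).ne' (hνfin a)
  have hqnonneg : ∀ a, 0 ≤ q a := fun a => ENNReal.toReal_nonneg
  -- ν of the finset is the sum of atoms
  have hνF : ∀ s : Finset α, ν (s : Set α) = ∑ a ∈ s, ν {a} := by
    intro s
    rw [← Set.biUnion_of_singleton (s : Set α), Finset.set_biUnion_coe]
    rw [measure_biUnion_finset ?_ (fun a _ => measurableSet_singleton a)]
    · intro a _ b _ hab
      simp [Function.onFun, Set.disjoint_singleton, hab]
  have hsumq : ∑ a ∈ F, q a = 1 := by
    have := hνF F
    rw [hF] at this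
    have h2 : (∑ a ∈ F, ν {a}).toReal = 1 := by rw [← this]; simp
    rw [ENNReal.toReal_sum (fun a _ => hνfin a)] at h2
    exact h2
  -- minimum atom size
  set δ : ℝ := F.inf' hFne q with hδ
  have hδpos : 0 < δ := by
    rw [hδ]
    exact (Finset.lt_inf'_iff hFne).2 fun a ha => hqpos a ha
  have hδle : ∀ a ∈ F, δ ≤ q a := fun a ha => Finset.inf'_le q ha
  -- choose N
  set N : ℕ := max 1 (max ⌈(F.card : ℝ) / ε⌉₊ ⌈1 / (ε * δ)⌉₊) with hN
  have hN1 : 1 ≤ N := le_max_left _ _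
  have hNpos : (0 : ℝ) < N := by exact_mod_cast hN1
  have hNcard : (F.card : ℝ) ≤ ε * N := by
    have h1 : (⌈(F.card : ℝ) / ε⌉₊ : ℝ) ≤ N := by
      exact_mod_cast le_trans (le_max_left _ _) (le_max_right 1 _)
    have h2 : (F.card : ℝ) / ε ≤ N := le_trans (Nat.le_ceil _) h1
    calc (F.card : ℝ) = ((F.card : ℝ) / ε) * ε := by rw [div_mul_cancel₀ _ hε.ne']
    _ ≤ (N : ℝ) * ε := by nlinarith
    _ = ε * N := by ring
  have hNδ : 1 ≤ ε * δ * N := by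
    have h1 : (⌈1 / (ε * δ)⌉₊ : ℝ) ≤ N := by
      exact_mod_cast le_trans (le_max_right _ _) (le_max_right 1 _)
    have h2 : 1 / (ε * δ) ≤ N := le_trans (Nat.le_ceil _) h1
    have h3 : 0 < ε * δ := mul_pos hε hδpos
    calc (1 : ℝ) = (1 / (ε * δ)) * (ε * δ) := by field_simp
    _ ≤ (N : ℝ) * (ε * δ) := by nlinarith
    _ = ε * δ * N := by ring
  -- the multiplicities
  set k : α → ℕ := fun a => ⌈(N : ℝ) * q a⌉₊ with hk
  have hk1 : ∀ a ∈ F, 1 ≤ k a := by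
    intro a ha
    exact Nat.one_le_ceil_iff.2 (mul_pos hNpos (hqpos a ha))
  have hklow : ∀ a, (N : ℝ) * q a ≤ k a := fun a => Nat.le_ceil _
  have hkup : ∀ a, (k a : ℝ) ≤ (N : ℝ) * q a + 1 := by
    intro a
    have := Nat.ceil_lt_add_one (mul_nonneg hNpos.le (hqnonneg a))
    exact le_of_lt this
  set m : ℕ := ∑ a ∈ F, k a with hm
  have hmpos : 0 < m := by
    obtain ⟨a, ha⟩ := hFne
    exact lt_of_lt_of_le (hk1 a ha) (Finset.single_le_sum (fun b _ => Nat.zero_le _) ha)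
  have hmR : (m : ℝ) = ∑ a ∈ F, (k a : ℝ) := by exact_mod_cast Nat.cast_sum F k
  have hmposR : (0 : ℝ) < m := by exact_mod_cast hmpos
  have hmlow : (N : ℝ) ≤ m := by
    rw [hmR]
    calc (N : ℝ) = ∑ a ∈ F, (N : ℝ) * q a := by rw [← Finset.mul_sum, hsumq, mul_one]
    _ ≤ ∑ a ∈ F, (k a : ℝ) := Finset.sum_le_sum fun a _ => hklow a
  have hmup : (m : ℝ) ≤ N + F.card := by
    rw [hmR]
    calc ∑ a ∈ F, (k a : ℝ) ≤ ∑ a ∈ F, ((N : ℝ) * q a + 1) :=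
      Finset.sum_le_sum fun a _ => hkup a
    _ = (N : ℝ) + F.card := by
      rw [Finset.sum_add_distrib, ← Finset.mul_sum, hsumq]; simp
  -- real per-atom bounds
  have hlowR : ∀ a ∈ F, (1 - ε) * q a ≤ (k a : ℝ) / m := by
    intro a ha
    rw [le_div_iff₀ hmposR]
    have h1 : (1 - ε) * (m : ℝ) ≤ N := by nlinarith
    have h2 : (1 - ε) * q a * m = q a * ((1 - ε) * m) := by ring
    have h3 : q a * ((1 - ε) * m) ≤ q a * N :=
      mul_le_mul_of_nonneg_left h1 (hqnonneg a)
    calc (1 - ε) * q a * m = q a * ((1 - ε) * m) := by ring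
    _ ≤ q a * N := h3
    _ = (N : ℝ) * q a := by ring
    _ ≤ k a := hklow a
  have hupR : ∀ a ∈ F, (k a : ℝ) / m ≤ (1 + ε) * q a := by
    intro a ha
    rw [div_le_iff₀ hmposR]
    have hδa := hδle a ha
    have hqa := hqpos a ha
    have h1 : 1 ≤ ε * q a * N := by nlinarith
    calc (k a : ℝ) ≤ (N : ℝ) * q a + 1 := hkup a
    _ ≤ (N : ℝ) * q a + ε * q a * N := by linarith
    _ = (1 + ε) * q a * N := by ring
    _ ≤ (1 + ε) * q a * m :=
      mul_le_mul_of_nonneg_left hmlow (by positivity)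
  -- construct the points via a sigma type
  have hcard : Fintype.card (Σ a : {x // x ∈ F}, Fin (k a.1)) = m := by
    rw [Fintype.card_sigma]
    simp only [Fintype.card_fin]
    rw [hm, ← Finset.sum_coe_sort F k]
  set e : (Σ a : {x // x ∈ F}, Fin (k a.1)) ≃ Fin m := Fintype.equivFinOfCardEq hcard with he
  set z : Fin m → α := fun i => ((e.symm i).1 : α) with hz
  refine ⟨m, hmpos, z, fun i => (e.symm i).1.2, ?_, ?_⟩
  · intro w hw
    refine ⟨e ⟨⟨w, hw⟩, ⟨0, hk1 w hw⟩⟩, ?_⟩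
    simp [hz]
  · intro A hA
    -- compute μ A
    have hcount : ∀ f : α → ℝ≥0∞, ∑ i : Fin m, f (z i) = ∑ a ∈ F, (k a : ℝ≥0∞) * f a := by
      intro f
      have h1 : ∑ i : Fin m, f (z i) = ∑ s : (Σ a : {x // x ∈ F}, Fin (k a.1)), f (s.1 : α) := by
        rw [← Equiv.sum_comp e (fun i => f (z i))]
        apply Finset.sum_congr rfl
        intro s _
        simp [hz]
      rw [h1, ← Finset.univ_sigma_univ, Finset.sum_sigma,
        ← Finset.sum_coe_sort F (fun a => (k a : ℝ≥0∞) * f a)]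
      apply Finset.sum_congr rfl
      intro a _
      simp [Finset.sum_const, nsmul_eq_mul]
    have hμA : ((m : ℝ≥0∞)⁻¹ • ∑ i : Fin m, MeasureTheory.Measure.dirac (z i)) A
        = ∑ a ∈ F, (m : ℝ≥0∞)⁻¹ * ((k a : ℝ≥0∞) * A.indicator 1 a) := by
      rw [Measure.smul_apply, Measure.coe_finset_sum]
      simp only [Finset.sum_apply, Measure.dirac_apply]
      rw [hcount (fun a => A.indicator 1 a), smul_eq_mul, Finset.mul_sum]
    -- compute ν A
    have hνA : ν A = ∑ a ∈ F, A.indicator (fun a => ν {a}) a := by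
      have hF0 : ν ((F : Set α)ᶜ) = 0 := by
        rw [prob_compl_eq_one_sub F.measurableSet, hF]; simp
      have h1 : ν A = ν (A ∩ F) := by
        have : ν (A \ (F : Set α)) = 0 :=
          measure_mono_null (Set.diff_subset_compl A (F : Set α)) hF0
        rw [← measure_inter_add_diff A F.measurableSet, this, add_zero]
      have h2 : A ∩ (F : Set α) = ((F.filter (· ∈ A) : Finset α) : Set α) := by
        ext x; simp [Finset.mem_filter, and_comm]
      rw [h1, h2, hνF, Finset.sum_filter]
      apply Finset.sum_congr rfl
      intro a _
      by_cases hax : a ∈ A <;> simp [hax]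
    -- per-atom comparison in ℝ≥0∞
    have hterm : ∀ a ∈ F,
        (ENNReal.ofReal (1 - ε) * A.indicator (fun a => ν {a}) a
          ≤ (m : ℝ≥0∞)⁻¹ * ((k a : ℝ≥0∞) * A.indicator 1 a)) ∧
        ((m : ℝ≥0∞)⁻¹ * ((k a : ℝ≥0∞) * A.indicator 1 a)
          ≤ ENNReal.ofReal (1 + ε) * A.indicator (fun a => ν {a}) a) := by
      intro a ha
      by_cases hax : a ∈ A
      · simp only [Set.indicator_of_mem hax, Pi.one_apply, mul_one]
        have hkm : (m : ℝ≥0∞)⁻¹ * (k a : ℝ≥0∞) = ENNReal.ofReal ((k a : ℝ) / m) := by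
          rw [ENNReal.ofReal_div_of_pos hmposR, ENNReal.ofReal_natCast,
            ENNReal.ofReal_natCast, ENNReal.div_eq_inv_mul]
        constructor
        · rw [hkm, hqof a]
          rcases le_or_gt (1 - ε) 0 with h | h
          · rw [ENNReal.ofReal_of_nonpos h, zero_mul]; exact zero_le
          · rw [← ENNReal.ofReal_mul h.le]
            exact ENNReal.ofReal_le_ofReal (hlowR a ha)
        · rw [hkm, hqof a, ← ENNReal.ofReal_mul (by linarith : (0:ℝ) ≤ 1 + ε)]
          exact ENNReal.ofReal_le_ofReal (hupR a ha)
      · simp [Set.indicator_of_notMem hax]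
    constructor
    · rw [hμA, hνA, Finset.mul_sum]
      exact Finset.sum_le_sum fun a ha => (hterm a ha).1
    · rw [hμA, hνA, Finset.mul_sum]
      exact Finset.sum_le_sum fun a ha => (hterm a ha).2
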